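/- Let S be a measurable space, A a measurable space, and for j = 1,…,N let f_j : S → A be measurable functions, μ_j finite measures on S, and α_j ≥ 0 with ∑ α_j = 1. Define Q on S × A by Q(B × D) = ∑_j α_j μ_j({s ∈ B : f_j(s) ∈ D}), and let q = ∑_j α_j μ_j be its marginal on S. Then there exist measurable functions γ_j : S → [0,1] with ∑_j γ_j(s) = 1 for all s, such that the kernel φ(·|s) := ∑_j γ_j(s) δ_{f_j(s)}(·) disintegrates Q, i.e., Q(B × D) = ∫_B φ(D|s) q(ds) for all measurable B ⊆ S, D ⊆ A. -/

import Mathlib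

open MeasureTheory

lemma rnDeriv_finset_sum {S : Type*} [MeasurableSpace S] {N : ℕ}
    (ν : Fin N → Measure S) [∀ j, IsFiniteMeasure (ν j)] (q : Measure S) [SigmaFinite q]
    (t : Finset (Fin N)) :
    (∑ j ∈ t, ν j).rnDeriv q =ᵐ[q] fun s => ∑ j ∈ t, (ν j).rnDeriv q s := by
  classical
  induction t using Finset.induction_on with
  | empty =>
      simp only [Finset.sum_empty]
      exact Measure.rnDeriv_zero q
  | @insert a s hj ih =>
      rw [Finset.sum_insert hj]
      refine (Measure.rnDeriv_add (ν a) (∑ j ∈ s, ν j) q).trans ?_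
      filter_upwards [ih] with x hx
      simp [hx, Finset.sum_insert hj]

theorem stmt_6 {S A : Type*} [MeasurableSpace S] [MeasurableSpace A] (N : ℕ)
    (f : Fin N → S → A) (hf : ∀ j, Measurable (f j))
    (μ : Fin N → Measure S) [∀ j, IsFiniteMeasure (μ j)]
    (α : Fin N → NNReal) (hα : ∑ j, α j = 1)
    (q : Measure S) (hq : q = ∑ j, (α j : ENNReal) • μ j) :
    ∃ γ : Fin N → S → ENNReal,
      (∀ j, Measurable (γ j)) ∧ (∀ j s, γ j s ≤ 1) ∧ (∀ s, ∑ j, γ j s = 1) ∧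
      ∀ B D : Set _, MeasurableSet B → MeasurableSet D →
        ∑ j, (α j : ENNReal) * μ j (B ∩ f j ⁻¹' D) =
          ∫⁻ s in B, ∑ j, γ j s * Set.indicator (f j ⁻¹' D) (fun _ => 1) s ∂q := by
  classical
  have hN : 0 < N := by
    rcases Nat.eq_zero_or_pos N with h | h
    · subst h; simp at hα
    · exact h
  set ν : Fin N → Measure S := fun j => (α j : ENNReal) • μ j with hν
  have hvfin : ∀ j, IsFiniteMeasure (ν j) := by
    intro j
    exact MeasureTheory.isFiniteMeasureSMulOfNNRealTower (μ := μ j) (r := α j)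
  have hq' : q = ∑ j, ν j := hq
  haveI hqfin : IsFiniteMeasure q := by
    rw [hq']
    constructor
    rw [Measure.finset_sum_apply]
    exact ENNReal.sum_lt_top.mpr fun j _ => (hvfin j).measure_univ_lt_top
  have hle : ∀ j, ν j ≤ q := by
    intro j
    refine Measure.le_iff.mpr fun t ht => ?_
    rw [hq', Measure.finset_sum_apply]
    exact Finset.single_le_sum (f := fun i => ν i t) (fun i _ => zero_le)
      (Finset.mem_univ j)
  have hac : ∀ j, ν j ≪ q := fun j => (hle j).absolutelyContinuous
  set g : Fin N → S → ENNReal := fun j => (ν j).rnDeriv q with hg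
  have hgm : ∀ j, Measurable (g j) := fun j => Measure.measurable_rnDeriv _ _
  have hsumae : ∀ᵐ s ∂q, ∑ j, g j s = 1 := by
    have h1 := rnDeriv_finset_sum ν q Finset.univ
    have h2 : q.rnDeriv q =ᵐ[q] fun _ => 1 := Measure.rnDeriv_self q
    have h3 : (∑ j, ν j).rnDeriv q = q.rnDeriv q := by rw [← hq']
    filter_upwards [h1, h2] with s h1s h2s
    rw [hg]
    simp only [← h1s, h3, h2s]
  set E : Set S := {s | ∑ j, g j s = 1} with hE
  have hEm : MeasurableSet E :=
    (Finset.measurable_sum Finset.univ fun j _ => hgm j) (measurableSet_singleton 1)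
  set j0 : Fin N := ⟨0, hN⟩
  set γ : Fin N → S → ENNReal :=
    fun j s => if s ∈ E then g j s else if j = j0 then 1 else 0 with hγ
  have hγm : ∀ j, Measurable (γ j) := fun j =>
    Measurable.ite hEm (hgm j) measurable_const
  have hγle : ∀ j s, γ j s ≤ 1 := by
    intro j s
    rw [hγ]
    by_cases hs : s ∈ E
    · simp only [hs, if_pos]
      calc g j s ≤ ∑ i, g i s :=
            Finset.single_le_sum (f := fun i => g i s) (fun i _ => zero_le)
              (Finset.mem_univ j)
        _ = 1 := hs
    · simp only [hs, if_neg, if_false]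
      split <;> simp
  have hγsum : ∀ s, ∑ j, γ j s = 1 := by
    intro s
    rw [hγ]
    by_cases hs : s ∈ E
    · simp only [hγ, if_pos hs]
      exact hs
    · simp [hs]
  have hγae : ∀ j, γ j =ᵐ[q] g j := by
    intro j
    filter_upwards [hsumae] with s hs
    rw [hγ]
    simp only [hE] at *
    simp [Set.mem_setOf_eq, hs]
  refine ⟨γ, hγm, hγle, hγsum, ?_⟩
  intro B D hB hD
  have hind : ∀ j, Measurable (Set.indicator (f j ⁻¹' D) (fun _ : S => (1 : ENNReal))) :=
    fun j => measurable_const.indicator ((hf j) hD)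
  rw [lintegral_finset_sum _ (fun j _ => (show Measurable (fun s => γ j s * Set.indicator (f j ⁻¹' D) (fun _ => (1 : ENNReal)) s) from (hγm j).mul (hind j)))]
  refine Finset.sum_congr rfl fun j _ => ?_
  have hpre : MeasurableSet (f j ⁻¹' D) := (hf j) hD
  have step1 : ∫⁻ s in B, γ j s * Set.indicator (f j ⁻¹' D) (fun _ => 1) s ∂q
      = ∫⁻ s in B ∩ f j ⁻¹' D, γ j s ∂q := by
    have : ∀ s, γ j s * Set.indicator (f j ⁻¹' D) (fun _ => 1) s
        = Set.indicator (f j ⁻¹' D) (γ j) s := by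
      intro s
      by_cases hs : s ∈ f j ⁻¹' D <;> simp [hs]
    simp_rw [this]
    rw [lintegral_indicator hpre, Measure.restrict_restrict hpre, Set.inter_comm]
  have step2 : ∫⁻ s in B ∩ f j ⁻¹' D, γ j s ∂q = ∫⁻ s in B ∩ f j ⁻¹' D, g j s ∂q :=
    lintegral_congr_ae (ae_restrict_of_ae (hγae j))
  haveI := hvfin j
  haveI : SigmaFinite (ν j) := inferInstance
  haveI : SFinite (ν j) := MeasureTheory.instSFiniteOfSigmaFinite
  haveI : (ν j).HaveLebesgueDecomposition q :=
    Measure.haveLebesgueDecomposition_of_sigmaFinite (ν j) q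
  have step3 : ∫⁻ s in B ∩ f j ⁻¹' D, g j s ∂q = ν j (B ∩ f j ⁻¹' D) :=
    Measure.setLIntegral_rnDeriv (hac j) _
  rw [step1, step2, step3, hν]
  simp
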